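/- Let H be a Hilbert space and P_0, ..., P_n ∈ L(H) be self-adjoint projections with P_i P_j = 0 for i ≠ j and ∑_{i=0}^n P_i = 1. Then for any bounded operator F on H, ‖∑_{i=0}^{n-1} P_i F P_{i+1}‖ ≤ ‖F‖. -/

import Mathlib

open ContinuousLinearMap

lemma normSqSum' {H : Type*} [NormedAddCommGroup H] [InnerProductSpace ℂ H]
    {ι : Type*} (s : Finset ι) (v : ι → H)
    (h : ∀ i ∈ s, ∀ j ∈ s, i ≠ j → (inner ℂ (v i) (v j) : ℂ) = 0) :
    ‖∑ i ∈ s, v i‖ ^ 2 = ∑ i ∈ s, ‖v i‖ ^ 2 := by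
  have key : (inner ℂ (∑ i ∈ s, v i) (∑ j ∈ s, v j) : ℂ) = ∑ i ∈ s, (inner ℂ (v i) (v i) : ℂ) := by
    rw [inner_sum]
    refine Finset.sum_congr rfl fun j hj => ?_
    rw [sum_inner, Finset.sum_eq_single j]
    · intro i hi hij; exact h i hi j hj hij
    · intro hj'; exact absurd hj hj'
  have h2 : (‖∑ i ∈ s, v i‖ : ℝ) ^ 2 = RCLike.re (inner ℂ (∑ i ∈ s, v i) (∑ j ∈ s, v j) : ℂ) := by
    rw [inner_self_eq_norm_sq]
  rw [h2, key, map_sum]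
  exact Finset.sum_congr rfl fun i _ => by rw [inner_self_eq_norm_sq]

lemma projNormLe {H : Type*} [NormedAddCommGroup H] [InnerProductSpace ℂ H] [CompleteSpace H]
    (P : H →L[ℂ] H) (hsa : IsSelfAdjoint P) (hid : P ∘L P = P) (y : H) : ‖P y‖ ≤ ‖y‖ := by
  have hPP : P (P y) = P y := by
    have := congrFun (congrArg DFunLike.coe hid) y
    simpa using this
  have h1 : (inner ℂ (P y) (P y) : ℂ) = inner ℂ y (P y) := by
    nth_rewrite 1 [← hsa.adjoint_eq]
    rw [ContinuousLinearMap.adjoint_inner_left, hPP]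
  have h2 : ‖P y‖ ^ 2 = RCLike.re (inner ℂ y (P y) : ℂ) := by
    rw [← h1, inner_self_eq_norm_sq]
  have h3 : RCLike.re (inner ℂ y (P y) : ℂ) ≤ ‖y‖ * ‖P y‖ := re_inner_le_norm y (P y)
  nlinarith [norm_nonneg (P y), norm_nonneg y]

/-- If `P₀, …, Pₙ` are mutually orthogonal self-adjoint projections on a Hilbert
space summing to the identity, then `‖∑_{i=0}^{n-1} Pᵢ F P_{i+1}‖ ≤ ‖F‖` for any
bounded operator `F`. -/
theorem stmt1 {H : Type*} [NormedAddCommGroup H] [InnerProductSpace ℂ H] [CompleteSpace H]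
    (n : ℕ) (P : Fin (n + 1) → H →L[ℂ] H)
    (hsa : ∀ i, IsSelfAdjoint (P i))
    (hidem : ∀ i, P i ∘L P i = P i)
    (horth : ∀ i j, i ≠ j → P i ∘L P j = 0)
    (hsum : ∑ i, P i = 1)
    (F : H →L[ℂ] H) :
    ‖∑ i : Fin n, P i.castSucc ∘L F ∘L P i.succ‖ ≤ ‖F‖ := by
  have horth' : ∀ (i j : Fin (n+1)), i ≠ j → ∀ (u w : H),
      (inner ℂ (P i u) (P j w) : ℂ) = 0 := by
    intro i j hij u w
    nth_rewrite 1 [← (hsa i).adjoint_eq]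
    rw [ContinuousLinearMap.adjoint_inner_left]
    have : P i (P j w) = 0 := by
      have := congrFun (congrArg DFunLike.coe (horth i j hij)) w
      simpa using this
    rw [this, inner_zero_right]
  refine opNorm_le_bound _ (norm_nonneg F) fun x => ?_
  set v : Fin n → H := fun i => P i.castSucc (F (P i.succ x)) with hv
  have hSx : (∑ i : Fin n, P i.castSucc ∘L F ∘L P i.succ) x = ∑ i : Fin n, v i := by
    simp [hv, ContinuousLinearMap.sum_apply]
  rw [hSx]
  -- pairwise orthogonality of v
  have hvo : ∀ i ∈ Finset.univ, ∀ j ∈ Finset.univ, i ≠ j → (inner ℂ (v i) (v j) : ℂ) = 0 := by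
    intro i _ j _ hij
    exact horth' i.castSucc j.castSucc (fun h => hij (Fin.castSucc_injective n h)) _ _
  have hsq : ‖∑ i : Fin n, v i‖ ^ 2 = ∑ i : Fin n, ‖v i‖ ^ 2 := normSqSum' _ _ hvo
  -- bound each term
  have hterm : ∀ i : Fin n, ‖v i‖ ^ 2 ≤ ‖F‖ ^ 2 * ‖P i.succ x‖ ^ 2 := by
    intro i
    have h1 : ‖v i‖ ≤ ‖F (P i.succ x)‖ :=
      projNormLe _ (hsa i.castSucc) (hidem i.castSucc) _
    have h2 : ‖F (P i.succ x)‖ ≤ ‖F‖ * ‖P i.succ x‖ := F.le_opNorm _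
    have h3 : ‖v i‖ ≤ ‖F‖ * ‖P i.succ x‖ := h1.trans h2
    nlinarith [norm_nonneg (v i), norm_nonneg (P i.succ x), norm_nonneg F,
      mul_nonneg (norm_nonneg F) (norm_nonneg (P i.succ x))]
  -- sum over succ is at most sum over all
  have hsub : ∑ i : Fin n, ‖P i.succ x‖ ^ 2 ≤ ∑ j : Fin (n+1), ‖P j x‖ ^ 2 := by
    rw [Fin.sum_univ_succ]
    nlinarith [norm_nonneg (P 0 x), sq_nonneg ‖P 0 x‖]
  -- Parseval: ∑ ‖P j x‖² = ‖x‖²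
  have hxsum : ∑ j : Fin (n+1), P j x = x := by
    have := congrFun (congrArg DFunLike.coe hsum) x
    simpa [ContinuousLinearMap.sum_apply] using this
  have hpar : ∑ j : Fin (n+1), ‖P j x‖ ^ 2 = ‖x‖ ^ 2 := by
    have := normSqSum' (Finset.univ : Finset (Fin (n+1))) (fun j => P j x)
      (fun i _ j _ hij => horth' i j hij x x)
    rw [hxsum] at this
    exact this.symm
  -- combine
  have hfin : ‖∑ i : Fin n, v i‖ ^ 2 ≤ (‖F‖ * ‖x‖) ^ 2 := by
    calc ‖∑ i : Fin n, v i‖ ^ 2 = ∑ i : Fin n, ‖v i‖ ^ 2 := hsq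
      _ ≤ ∑ i : Fin n, ‖F‖ ^ 2 * ‖P i.succ x‖ ^ 2 := Finset.sum_le_sum fun i _ => hterm i
      _ = ‖F‖ ^ 2 * ∑ i : Fin n, ‖P i.succ x‖ ^ 2 := by rw [Finset.mul_sum]
      _ ≤ ‖F‖ ^ 2 * ∑ j : Fin (n+1), ‖P j x‖ ^ 2 :=
          mul_le_mul_of_nonneg_left hsub (sq_nonneg _)
      _ = (‖F‖ * ‖x‖) ^ 2 := by rw [hpar, mul_pow]
  exact (pow_le_pow_iff_left₀ (norm_nonneg _)
    (mul_nonneg (norm_nonneg F) (norm_nonneg x)) two_ne_zero).mp hfin
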